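/- Let n ≥ 2 be an integer and L > 0. The function t ↦ ( ∏_{i=1}^{n−1} t_i^{−1/2} ) · t_n^{−1} is Lebesgue integrable on the simplex Δⁿ(0,L) = { t ∈ ℝⁿ : 0 < t₁ ≤ t₂ ≤ ⋯ ≤ t_n ≤ L }, and its integral is at most (2ⁿ/(n−1)) · L^{(n−1)/2}. -/

import Mathlib

open MeasureTheory Real

section AuxSimplex
open Set

noncomputable def phi' (s : ℝ) : ENNReal := ENNReal.ofReal (s ^ (-(1:ℝ)/2))

def simS (k : ℕ) (T : ℝ) : Set (Fin k → ℝ) :=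
  {t | (∀ i, 0 < t i) ∧ (∀ i j : Fin k, i ≤ j → t i ≤ t j) ∧ ∀ i, t i ≤ T}

lemma measurable_phi' : Measurable phi' := by
  unfold phi'; fun_prop

lemma measurable_prodPhi (k : ℕ) : Measurable (fun u : Fin k → ℝ => ∏ i, phi' (u i)) := by
  exact Finset.measurable_prod _ fun i _ => measurable_phi'.comp (measurable_pi_apply i)

lemma measurableSet_simS (k : ℕ) (T : ℝ) : MeasurableSet (simS k T) := by
  have h1 : MeasurableSet {t : Fin k → ℝ | ∀ i, 0 < t i} := by
    rw [Set.setOf_forall]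
    exact MeasurableSet.iInter fun i => measurableSet_lt measurable_const (measurable_pi_apply i)
  have h2 : MeasurableSet {t : Fin k → ℝ | ∀ i j : Fin k, i ≤ j → t i ≤ t j} := by
    rw [Set.setOf_forall]
    refine MeasurableSet.iInter fun i => ?_
    rw [Set.setOf_forall]
    refine MeasurableSet.iInter fun j => ?_
    by_cases hij : i ≤ j
    · simp only [hij, forall_true_left]
      exact measurableSet_le (measurable_pi_apply i) (measurable_pi_apply j)
    · simp only [hij, false_implies, Set.setOf_true]
      exact MeasurableSet.univ
  have h3 : MeasurableSet {t : Fin k → ℝ | ∀ i, t i ≤ T} := by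
    rw [Set.setOf_forall]
    exact MeasurableSet.iInter fun i => measurableSet_le (measurable_pi_apply i) measurable_const
  have : simS k T = {t : Fin k → ℝ | ∀ i, 0 < t i} ∩
      ({t | ∀ i j : Fin k, i ≤ j → t i ≤ t j} ∩ {t | ∀ i, t i ≤ T}) := by
    ext t; simp [simS, and_assoc]
  rw [this]; exact h1.inter (h2.inter h3)

lemma lint_rpow {p : ℝ} (hp : -1 < p) {T : ℝ} (hT : 0 < T) :
    ∫⁻ s in Set.Ioc 0 T, ENNReal.ofReal (s ^ p) = ENNReal.ofReal (T ^ (p+1) / (p+1)) := by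
  have hi : IntegrableOn (fun s : ℝ => s ^ p) (Set.Ioc 0 T) := by
    have := intervalIntegral.intervalIntegrable_rpow' (a := 0) (b := T) hp
    rwa [intervalIntegrable_iff_integrableOn_Ioc_of_le hT.le] at this
  have hpos : 0 ≤ᵐ[volume.restrict (Set.Ioc 0 T)] fun s : ℝ => s ^ p := by
    filter_upwards [self_mem_ae_restrict measurableSet_Ioc] with s hs
    exact Real.rpow_nonneg hs.1.le p
  rw [← ofReal_integral_eq_lintegral_ofReal hi hpos]
  congr 1
  rw [← intervalIntegral.integral_of_le hT.le, integral_rpow (Or.inl hp),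
    Real.zero_rpow (by linarith)]
  ring

lemma e_fst (k : ℕ) (t : Fin (k+1) → ℝ) :
    ((MeasurableEquiv.piFinSuccAbove (fun _ : Fin (k+1) => ℝ) (Fin.last k)) t).1
      = t (Fin.last k) := rfl

lemma e_snd (k : ℕ) (t : Fin (k+1) → ℝ) (j : Fin k) :
    ((MeasurableEquiv.piFinSuccAbove (fun _ : Fin (k+1) => ℝ) (Fin.last k)) t).2 j
      = t j.castSucc := by
  simp [MeasurableEquiv.piFinSuccAbove_apply, Fin.removeNth, Fin.succAbove_last, Fin.init]

lemma mem_simS_succ (k : ℕ) (T : ℝ) (t : Fin (k+1) → ℝ) :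
    t ∈ simS (k+1) T ↔
      (t (Fin.last k) ∈ Set.Ioc 0 T ∧ (fun j : Fin k => t j.castSucc) ∈ simS k (t (Fin.last k))) := by
  constructor
  · rintro ⟨h1, h2, h3⟩
    exact ⟨⟨h1 _, h3 _⟩, fun i => h1 _,
      fun i j hij => h2 _ _ (Fin.castSucc_le_castSucc_iff.mpr hij),
      fun i => h2 _ _ (Fin.le_last _)⟩
  · rintro ⟨⟨hs0, hsT⟩, h1, h2, h3⟩
    refine ⟨?_, ?_, ?_⟩
    · intro i
      induction i using Fin.lastCases with
      | last => exact hs0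
      | cast i => exact h1 i
    · intro i j hij
      induction j using Fin.lastCases with
      | last =>
        induction i using Fin.lastCases with
        | last => exact le_refl _
        | cast i => exact h3 i
      | cast j =>
        induction i using Fin.lastCases with
        | last => exact absurd (lt_of_le_of_lt hij (Fin.castSucc_lt_last j)) (lt_irrefl _)
        | cast i => exact h2 i j (by simpa using hij)
    · intro i
      induction i using Fin.lastCases with
      | last => exact hsT
      | cast i => exact (h3 i).trans hsT

lemma lintegral_split (k : ℕ) (T : ℝ) (g : ℝ → ENNReal) (hg : Measurable g) :
    ∫⁻ t in simS (k+1) T, (∏ i : Fin k, phi' (t i.castSucc)) * g (t (Fin.last k)) =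
      ∫⁻ s in Set.Ioc 0 T, g s * ∫⁻ u in simS k s, ∏ i, phi' (u i) := by
  set e := MeasurableEquiv.piFinSuccAbove (fun _ : Fin (k+1) => ℝ) (Fin.last k) with he
  have hmp : MeasurePreserving e volume volume :=
    volume_preserving_piFinSuccAbove (fun _ : Fin (k+1) => ℝ) (Fin.last k)
  set H : ℝ × (Fin k → ℝ) → ENNReal := fun p => g p.1 * ∏ i, phi' (p.2 i) with hH
  have hHm : Measurable H := by
    apply Measurable.mul (hg.comp measurable_fst)
    exact Finset.measurable_prod _ fun i _ =>
      measurable_phi'.comp ((measurable_pi_apply i).comp measurable_snd)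
  set B : Set (ℝ × (Fin k → ℝ)) := {p | p.1 ∈ Set.Ioc 0 T ∧ p.2 ∈ simS k p.1} with hBdef
  have hB : MeasurableSet B := by
    have : B = {p : ℝ × (Fin k → ℝ) | 0 < p.1} ∩ {p | p.1 ≤ T} ∩ {p | ∀ i, 0 < p.2 i}
        ∩ {p | ∀ i j : Fin k, i ≤ j → p.2 i ≤ p.2 j} ∩ {p | ∀ i, p.2 i ≤ p.1} := by
      ext p; simp [hBdef, simS, and_assoc]
    rw [this]
    refine ((((measurableSet_lt measurable_const measurable_fst).inter
      (measurableSet_le measurable_fst measurable_const)).inter ?_).inter ?_).inter ?_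
    · rw [Set.setOf_forall]
      exact MeasurableSet.iInter fun i => measurableSet_lt measurable_const (by fun_prop)
    · rw [Set.setOf_forall]
      refine MeasurableSet.iInter fun i => ?_
      rw [Set.setOf_forall]
      refine MeasurableSet.iInter fun j => ?_
      by_cases hij : i ≤ j
      · simp only [hij, forall_true_left]
        exact measurableSet_le (by fun_prop) (by fun_prop)
      · simp only [hij, false_implies, Set.setOf_true]; exact MeasurableSet.univ
    · rw [Set.setOf_forall]
      exact MeasurableSet.iInter fun i => measurableSet_le (by fun_prop) measurable_fst
  have hpre : simS (k+1) T = e ⁻¹' B := by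
    ext t
    rw [Set.mem_preimage, mem_simS_succ]
    constructor
    · rintro ⟨ha, hb⟩
      refine ⟨by rwa [e_fst], ?_⟩
      have : (e t).2 = fun j : Fin k => t j.castSucc := funext fun j => e_snd k t j
      rw [this, e_fst]; exact hb
    · rintro ⟨ha, hb⟩
      refine ⟨by rwa [e_fst] at ha, ?_⟩
      have : (e t).2 = fun j : Fin k => t j.castSucc := funext fun j => e_snd k t j
      rw [this, e_fst] at hb; exact hb
  have step1 : ∫⁻ t in simS (k+1) T, (∏ i : Fin k, phi' (t i.castSucc)) * g (t (Fin.last k))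
      = ∫⁻ p in B, H p := by
    rw [hpre, ← hmp.setLIntegral_comp_preimage_emb e.measurableEmbedding H B]
    refine setLIntegral_congr_fun (hB.preimage e.measurable) (fun t _ => ?_)
    simp only [hH, he, e_fst]
    rw [show ((MeasurableEquiv.piFinSuccAbove (fun _ : Fin (k+1) => ℝ) (Fin.last k)) t).2
        = fun j : Fin k => t j.castSucc from funext fun j => e_snd k t j]
    ring
  rw [step1]
  rw [← lintegral_indicator hB, Measure.volume_eq_prod, lintegral_prod _ (hHm.indicator hB).aemeasurable]
  rw [← lintegral_indicator measurableSet_Ioc]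
  congr 1
  funext s
  by_cases hs : s ∈ Set.Ioc 0 T
  · have : ∀ u : Fin k → ℝ, B.indicator H (s, u)
        = (simS k s).indicator (fun u => g s * ∏ i, phi' (u i)) u := by
      intro u
      by_cases hu : u ∈ simS k s
      · rw [Set.indicator_of_mem (by exact ⟨hs, hu⟩), Set.indicator_of_mem hu]
      · rw [Set.indicator_of_notMem (by simp [hBdef, hu]), Set.indicator_of_notMem hu]
    simp_rw [this]
    rw [lintegral_indicator (measurableSet_simS k s), Set.indicator_of_mem hs,
      lintegral_const_mul _ (measurable_prodPhi k)]
  · have : ∀ u : Fin k → ℝ, B.indicator H (s, u) = 0 := by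
      intro u
      rw [Set.indicator_of_notMem (by simp [hBdef]; intro h1 h2; exact absurd ⟨h1,h2⟩ hs)]
    simp_rw [this]
    rw [lintegral_zero, Set.indicator_of_notMem hs]

lemma J_eq : ∀ (k : ℕ) (T : ℝ), 0 < T →
    ∫⁻ u in simS k T, ∏ i, phi' (u i)
      = ENNReal.ofReal (2^k / (k.factorial : ℝ) * T ^ ((k:ℝ)/2)) := by
  intro k
  induction k with
  | zero =>
    intro T hT
    have hu : simS 0 T = Set.univ := by
      ext t; simp [simS]
    rw [hu]
    simp only [Finset.univ_eq_empty, Finset.prod_empty]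
    rw [lintegral_one, Measure.restrict_univ]
    have hv : (volume : Measure (Fin 0 → ℝ)) Set.univ = 1 := by
      rw [volume_pi, Measure.pi_univ]
      simp
    rw [hv]
    norm_num
  | succ k ih =>
    intro T hT
    have hsplit := lintegral_split k T phi' measurable_phi'
    have hbody : ∀ u : Fin (k+1) → ℝ, (∏ i, phi' (u i))
        = (∏ i : Fin k, phi' (u i.castSucc)) * phi' (u (Fin.last k)) :=
      fun u => Fin.prod_univ_castSucc _
    rw [show (fun u : Fin (k+1) → ℝ => ∏ i, phi' (u i))
        = fun u => (∏ i : Fin k, phi' (u i.castSucc)) * phi' (u (Fin.last k)) from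
        funext hbody] at *
    rw [hsplit]
    have hcong : ∀ s ∈ Set.Ioc (0:ℝ) T,
        phi' s * ∫⁻ u in simS k s, ∏ i, phi' (u i)
          = ENNReal.ofReal (2^k / (k.factorial : ℝ)) * ENNReal.ofReal (s ^ (((k:ℝ)-1)/2)) := by
      intro s hs
      rw [ih s hs.1, phi',
        ← ENNReal.ofReal_mul (Real.rpow_nonneg hs.1.le _),
        ← ENNReal.ofReal_mul (by positivity)]
      congr 1
      rw [show ((k:ℝ)-1)/2 = -(1:ℝ)/2 + (k:ℝ)/2 by ring, Real.rpow_add hs.1]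
      ring
    rw [setLIntegral_congr_fun measurableSet_Ioc hcong,
      lintegral_const_mul' _ _ ENNReal.ofReal_ne_top,
      lint_rpow (p := ((k:ℝ)-1)/2)
        (by have : (0:ℝ) ≤ k := Nat.cast_nonneg k; linarith) hT]
    rw [← ENNReal.ofReal_mul (by positivity)]
    congr 1
    have h1 : ((k:ℝ)-1)/2 + 1 = ((k:ℝ)+1)/2 := by ring
    rw [h1]
    have h2 : ((k+1:ℕ):ℝ) = (k:ℝ)+1 := by push_cast; ring
    rw [h2, Nat.factorial_succ]
    have hk1 : (0:ℝ) < (k:ℝ)+1 := by positivity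
    have hkf : (0:ℝ) < (k.factorial : ℝ) := by exact_mod_cast k.factorial_pos
    push_cast
    field_simp
    ring

lemma stmt_aux (k : ℕ) (hk : 1 ≤ k) (L : ℝ) (hL : 0 < L) :
    IntegrableOn (fun t : Fin (k+1) → ℝ =>
        (∏ i : Fin k, (t i.castSucc) ^ (-(1:ℝ)/2)) * (t (Fin.last k))⁻¹) (simS (k+1) L) ∧
    ∫ t in simS (k+1) L, (∏ i : Fin k, (t i.castSucc) ^ (-(1:ℝ)/2)) * (t (Fin.last k))⁻¹
      ≤ (2^(k+1) / (((k+1:ℕ):ℝ) - 1)) * L ^ ((((k+1:ℕ):ℝ) - 1)/2) := by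
  have hk' : (1:ℝ) ≤ (k:ℝ) := by exact_mod_cast hk
  set f : (Fin (k+1) → ℝ) → ℝ := fun t =>
    (∏ i : Fin k, (t i.castSucc) ^ (-(1:ℝ)/2)) * (t (Fin.last k))⁻¹ with hf
  have hfm : Measurable f := by
    apply Measurable.mul
    · exact Finset.measurable_prod _ fun i _ => by fun_prop
    · fun_prop
  have hfnn : ∀ t ∈ simS (k+1) L, 0 ≤ f t := by
    intro t ht
    exact mul_nonneg (Finset.prod_nonneg fun i _ => Real.rpow_nonneg (ht.1 _).le _)
      (inv_nonneg.2 (ht.1 _).le)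
  have key : ∀ t ∈ simS (k+1) L, ENNReal.ofReal (f t)
      = (∏ i : Fin k, phi' (t i.castSucc)) * ENNReal.ofReal (t (Fin.last k))⁻¹ := by
    intro t ht
    rw [hf, ENNReal.ofReal_mul (Finset.prod_nonneg fun i _ => Real.rpow_nonneg (ht.1 _).le _),
      ENNReal.ofReal_prod_of_nonneg (fun i _ => Real.rpow_nonneg (ht.1 _).le _)]
    rfl
  have hI : ∫⁻ t in simS (k+1) L,
        (∏ i : Fin k, phi' (t i.castSucc)) * ENNReal.ofReal (t (Fin.last k))⁻¹
      = ENNReal.ofReal (2^(k+1) / ((k:ℝ) * (k.factorial : ℝ)) * L ^ ((k:ℝ)/2)) := by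
    rw [lintegral_split k L (fun s => ENNReal.ofReal s⁻¹) (by fun_prop)]
    have hcong : ∀ s ∈ Set.Ioc (0:ℝ) L,
        ENNReal.ofReal s⁻¹ * ∫⁻ u in simS k s, ∏ i, phi' (u i)
          = ENNReal.ofReal (2^k / (k.factorial : ℝ)) * ENNReal.ofReal (s ^ ((k:ℝ)/2 - 1)) := by
      intro s hs
      rw [J_eq k s hs.1,
        ← ENNReal.ofReal_mul (inv_nonneg.2 hs.1.le),
        ← ENNReal.ofReal_mul (by positivity)]
      congr 1
      rw [show (k:ℝ)/2 - 1 = -1 + (k:ℝ)/2 by ring, Real.rpow_add hs.1, Real.rpow_neg_one]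
      ring
    rw [setLIntegral_congr_fun measurableSet_Ioc hcong,
      lintegral_const_mul' _ _ ENNReal.ofReal_ne_top,
      lint_rpow (p := (k:ℝ)/2 - 1) (by linarith) hL,
      ← ENNReal.ofReal_mul (by positivity)]
    congr 1
    have h1 : (k:ℝ)/2 - 1 + 1 = (k:ℝ)/2 := by ring
    rw [h1]
    have hkf : (0:ℝ) < (k.factorial : ℝ) := by exact_mod_cast k.factorial_pos
    field_simp
    ring
  have hae : 0 ≤ᵐ[volume.restrict (simS (k+1) L)] f := by
    filter_upwards [self_mem_ae_restrict (measurableSet_simS (k+1) L)] with t ht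
    exact hfnn t ht
  have hofReal : ∫⁻ t in simS (k+1) L, ENNReal.ofReal (f t)
      = ENNReal.ofReal (2^(k+1) / ((k:ℝ) * (k.factorial : ℝ)) * L ^ ((k:ℝ)/2)) := by
    rw [← hI]
    exact setLIntegral_congr_fun (measurableSet_simS _ _) key
  have hint : IntegrableOn f (simS (k+1) L) := by
    refine ⟨hfm.aestronglyMeasurable, ?_⟩
    rw [hasFiniteIntegral_iff_ofReal hae, hofReal]
    exact ENNReal.ofReal_lt_top
  refine ⟨hint, ?_⟩
  rw [integral_eq_lintegral_of_nonneg_ae hae hfm.aestronglyMeasurable]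
  rw [hofReal, ENNReal.toReal_ofReal (by positivity)]
  have he : (((k+1:ℕ):ℝ) - 1) = (k:ℝ) := by push_cast; ring
  rw [he]
  have hfac : (1:ℝ) ≤ (k.factorial : ℝ) := by exact_mod_cast k.factorial_pos
  have hmul : (k:ℝ) ≤ (k:ℝ) * (k.factorial : ℝ) := le_mul_of_one_le_right (by linarith) hfac
  gcongr

end AuxSimplex


/-- For `n ≥ 2` and `L > 0`, the function `t ↦ (∏_{i=1}^{n-1} t_i^{-1/2}) · t_n⁻¹` is
Lebesgue integrable on the ordered simplex `Δⁿ(0,L) = {t : 0 < t₁ ≤ ⋯ ≤ t_n ≤ L}`, and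
its integral is at most `(2ⁿ/(n-1)) · L^{(n-1)/2}`. -/
theorem stmt10 (n : ℕ) (hn : 2 ≤ n) (L : ℝ) (hL : 0 < L) :
    MeasureTheory.IntegrableOn
        (fun t : Fin n → ℝ =>
          (∏ i : Fin (n - 1), (t (Fin.castLE (Nat.sub_le n 1) i)) ^ (-(1 : ℝ) / 2)) *
            (t ⟨n - 1, by omega⟩)⁻¹)
        {t : Fin n → ℝ |
          (∀ i, 0 < t i) ∧ (∀ i j : Fin n, i ≤ j → t i ≤ t j) ∧ ∀ i, t i ≤ L} ∧
      ∫ t in {t : Fin n → ℝ |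
            (∀ i, 0 < t i) ∧ (∀ i j : Fin n, i ≤ j → t i ≤ t j) ∧ ∀ i, t i ≤ L},
          (∏ i : Fin (n - 1), (t (Fin.castLE (Nat.sub_le n 1) i)) ^ (-(1 : ℝ) / 2)) *
            (t ⟨n - 1, by omega⟩)⁻¹
        ≤ (2 ^ n / ((n : ℝ) - 1)) * L ^ (((n : ℝ) - 1) / 2) := by
  obtain ⟨k, rfl⟩ : ∃ k, n = k + 1 := ⟨n - 1, by omega⟩
  exact stmt_aux k (by omega) L hL
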